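/- Let T be a finite tree embedded in R^q (q ≥ 2) with edges mapped to straight line segments, such that along every edge the first coordinate x_1 is strictly monotone from parent to child (each child has larger x_1 than its parent). Let d > 0 be the minimum distance between any two disjoint (non-incident) edges of the embedding, and let φ : T × B → R^q be defined by φ(p, x) = φ_0(p) + (d/4)·(0, x) where φ_0 is the embedding and B is the unit ball of R^{q−1}. Then for every point z ∈ R^q, the fiber φ^{-1}(z) has cardinality at most the maximum vertex degree of T. -/

import Mathlib

open Metric

/-- Extend a vector of `ℝ^{q−1}` to `ℝ^q` by prepending a first coordinate `0`. -/
noncomputable def padZero (q : ℕ) (x : EuclideanSpace ℝ (Fin (q - 1))) : EuclideanSpace ℝ (Fin q) :=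
  (WithLp.equiv 2 (Fin q → ℝ)).symm
    (fun i => if h : (i : ℕ) = 0 then 0 else x ⟨(i : ℕ) - 1, by omega⟩)

lemma padZero_apply (q : ℕ) (x : EuclideanSpace ℝ (Fin (q-1))) (i : Fin q) :
    padZero q x i = if h : (i : ℕ) = 0 then 0 else x ⟨(i:ℕ) - 1, by omega⟩ := rfl

lemma seg_unique {q : ℕ} (i : Fin q) {a b p p' : EuclideanSpace ℝ (Fin q)}
    (hab : a i < b i) (hp : p ∈ segment ℝ a b) (hp' : p' ∈ segment ℝ a b)
    (h : p i = p' i) : p = p' := by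
  obtain ⟨s, t, hs, ht, hst, rfl⟩ := hp
  obtain ⟨s', t', hs', ht', hst', rfl⟩ := hp'
  have h2 : s * a i + t * b i = s' * a i + t' * b i := by
    simpa [PiLp.add_apply, PiLp.smul_apply] using h
  have h3 : (t - t') * (b i - a i) = 0 := by linear_combination h2 - a i * hst + a i * hst'
  have ht'' : t = t' := by
    rcases mul_eq_zero.mp h3 with h | h
    · linarith
    · linarith
  have hs'' : s = s' := by linarith
  rw [ht'', hs'']

lemma seg_bounds {q : ℕ} (i : Fin q) {a b p : EuclideanSpace ℝ (Fin q)}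
    (hab : a i ≤ b i) (hp : p ∈ segment ℝ a b) : a i ≤ p i ∧ p i ≤ b i := by
  obtain ⟨s, t, hs, ht, hst, rfl⟩ := hp
  have h2 : (s • a + t • b) i = s * a i + t * b i := by
    simp [PiLp.add_apply, PiLp.smul_apply]
  rw [h2]
  have hs' : s = 1 - t := by linarith
  subst hs'
  constructor <;> nlinarith [mul_nonneg ht (sub_nonneg.mpr hab)]

lemma seg_left {q : ℕ} (i : Fin q) {a b p : EuclideanSpace ℝ (Fin q)}
    (hab : a i < b i) (hp : p ∈ segment ℝ a b) (h : p i ≤ a i) : p = a := by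
  obtain ⟨s, t, hs, ht, hst, rfl⟩ := hp
  have h2 : s * a i + t * b i ≤ a i := by
    simpa [PiLp.add_apply, PiLp.smul_apply] using h
  have hs' : s = 1 - t := by linarith
  subst hs'
  have ht0 : t = 0 := by nlinarith [mul_nonneg ht (le_of_lt (sub_pos.mpr hab))]
  have hs1 : (1:ℝ) - t = 1 := by linarith
  simp [ht0, hs1]

lemma seg_right {q : ℕ} (i : Fin q) {a b p : EuclideanSpace ℝ (Fin q)}
    (hab : a i < b i) (hp : p ∈ segment ℝ a b) (h : b i ≤ p i) : p = b := by
  obtain ⟨s, t, hs, ht, hst, rfl⟩ := hp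
  have h2 : b i ≤ s * a i + t * b i := by
    simpa [PiLp.add_apply, PiLp.smul_apply] using h
  have ht' : t = 1 - s := by linarith
  subst ht'
  have hs0 : s = 0 := by nlinarith [mul_nonneg hs (le_of_lt (sub_pos.mpr hab))]
  have ht1 : (1:ℝ) - s = 1 := by linarith
  simp [hs0, ht1]

lemma padZero_norm (q : ℕ) (hq : 1 ≤ q) (x : EuclideanSpace ℝ (Fin (q-1))) :
    ‖padZero q x‖ = ‖x‖ := by
  obtain ⟨k, rfl⟩ : ∃ k, q = k + 1 := ⟨q - 1, by omega⟩
  rw [EuclideanSpace.norm_eq, EuclideanSpace.norm_eq]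
  congr 1
  rw [Fin.sum_univ_succ]
  simp [padZero_apply]

lemma padZero_inj (q : ℕ) (hq : 1 ≤ q) : Function.Injective (padZero q) := by
  intro x y h
  ext j
  have hj : (j : ℕ) + 1 < q := by omega
  have := congrArg (fun w => w ⟨(j : ℕ) + 1, hj⟩) h
  simpa [padZero_apply, Fin.eta] using this
/-- A finite rooted tree with vertex set `V`, root `root`, and parent map `parent`, is
embedded in `ℝ^q` by `φ₀`, with edges the segments from each non-root vertex to its
parent, strictly increasing in the first coordinate from parent to child, injectively
(non-incident edges have disjoint images), and `d > 0` bounds below the distance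
between non-incident edges.  Then every fiber of
`φ(p, x) = p + (d/4)·(0, x)` on `T × B(0,1)` has at most `maxdegree(T)` points. -/
theorem stmt14 (q : ℕ) (hq : 2 ≤ q)
    (V : Type) [Fintype V] [DecidableEq V]
    (root : V) (parent : V → V)
    (hroot : parent root = root)
    (hwf : ∀ v : V, ∃ k : ℕ, parent^[k] v = root)
    (φ₀ : V → EuclideanSpace ℝ (Fin q))
    (hφinj : Function.Injective φ₀)
    (hmono : ∀ v : V, v ≠ root → φ₀ (parent v) ⟨0, by omega⟩ < φ₀ v ⟨0, by omega⟩)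
    (hemb : ∀ v w : V, v ≠ root → w ≠ root →
      ({v, parent v} : Set V) ∩ {w, parent w} = ∅ →
      segment ℝ (φ₀ (parent v)) (φ₀ v) ∩ segment ℝ (φ₀ (parent w)) (φ₀ w) = ∅)
    (d : ℝ) (hd : 0 < d)
    (hdist : ∀ v w : V, v ≠ root → w ≠ root →
      ({v, parent v} : Set V) ∩ {w, parent w} = ∅ →
      ∀ p ∈ segment ℝ (φ₀ (parent v)) (φ₀ v),
        ∀ p' ∈ segment ℝ (φ₀ (parent w)) (φ₀ w), d ≤ dist p p') :
    ∀ z : EuclideanSpace ℝ (Fin q),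
      Set.ncard {px : EuclideanSpace ℝ (Fin q) × EuclideanSpace ℝ (Fin (q - 1)) |
          (∃ v : V, v ≠ root ∧ px.1 ∈ segment ℝ (φ₀ (parent v)) (φ₀ v)) ∧
          px.2 ∈ closedBall (0 : EuclideanSpace ℝ (Fin (q - 1))) 1 ∧
          px.1 + (d / 4) • padZero q px.2 = z} ≤
        Finset.univ.sup (fun v : V =>
          (Finset.univ.filter (fun w : V => w ≠ root ∧ parent w = v)).card +
            (if v = root then 0 else 1)) := by
  intro z
  set i0 : Fin q := ⟨0, by omega⟩ with hi0
  set S := {px : EuclideanSpace ℝ (Fin q) × EuclideanSpace ℝ (Fin (q - 1)) |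
          (∃ v : V, v ≠ root ∧ px.1 ∈ segment ℝ (φ₀ (parent v)) (φ₀ v)) ∧
          px.2 ∈ closedBall (0 : EuclideanSpace ℝ (Fin (q - 1))) 1 ∧
          px.1 + (d / 4) • padZero q px.2 = z} with hSdef
  rcases Set.eq_empty_or_nonempty S with hSe | hSne
  · rw [hSe]; simp
  -- fibers have the same first coordinate as z
  have key0 : ∀ a ∈ S, a.1 i0 = z i0 := by
    intro a ha
    have h := congrArg (fun w => w i0) ha.2.2
    have hpz : padZero q a.2 i0 = 0 := by simp [padZero_apply, hi0]
    simpa [PiLp.add_apply, PiLp.smul_apply, hpz] using h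
  -- the first factor determines the element of S
  have keyx : ∀ a ∈ S, ∀ a' ∈ S, a.1 = a'.1 → a = a' := by
    intro a ha a' ha' h1
    have h := ha.2.2.trans ha'.2.2.symm
    rw [h1] at h
    have h2 : (d/4) • padZero q a.2 = (d/4) • padZero q a'.2 := by
      exact add_left_cancel h
    have h3 : padZero q a.2 = padZero q a'.2 :=
      smul_right_injective _ (by positivity : (0:ℝ) < d/4).ne' h2
    have h4 : a.2 = a'.2 := padZero_inj q (by omega) h3
    exact Prod.ext h1 h4
  -- points of S are pairwise within d/2 < d
  have keydist : ∀ a ∈ S, ∀ a' ∈ S, dist a.1 a'.1 < d := by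
    intro a ha a' ha'
    have hsub : a.1 - a'.1 = (d/4) • padZero q a'.2 - (d/4) • padZero q a.2 := by
      have h1 := ha.2.2
      have h2 := ha'.2.2
      have h := h1.trans h2.symm
      linear_combination (norm := module) h
    have hb : ‖a.2‖ ≤ 1 := by simpa using ha.2.1
    have hb' : ‖a'.2‖ ≤ 1 := by simpa using ha'.2.1
    rw [dist_eq_norm, hsub]
    calc ‖(d/4) • padZero q a'.2 - (d/4) • padZero q a.2‖
        ≤ ‖(d/4) • padZero q a'.2‖ + ‖(d/4) • padZero q a.2‖ := norm_sub_le _ _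
      _ = (d/4) * ‖a'.2‖ + (d/4) * ‖a.2‖ := by
          rw [norm_smul, norm_smul, padZero_norm q (by omega), padZero_norm q (by omega),
            Real.norm_eq_abs, abs_of_pos (by positivity : (0:ℝ) < d/4)]
      _ < d := by nlinarith
  -- key combinatorial lemma
  have keypair : ∀ a ∈ S, ∀ a' ∈ S, a ≠ a' →
      ∀ v v' : V, v ≠ root → v' ≠ root →
      a.1 ∈ segment ℝ (φ₀ (parent v)) (φ₀ v) →
      a'.1 ∈ segment ℝ (φ₀ (parent v')) (φ₀ v') →
      v ≠ v' ∧ parent v = parent v' := by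
    intro a ha a' ha' hne v v' hv hv' hseg hseg'
    have hp : a.1 ≠ a'.1 := fun h => hne (keyx a ha a' ha' h)
    have h0 : a.1 i0 = a'.1 i0 := (key0 a ha).trans (key0 a' ha').symm
    have hcap : ¬ (({v, parent v} : Set V) ∩ {v', parent v'} = ∅) := by
      intro h
      have h1 := hdist v v' hv hv' h a.1 hseg a'.1 hseg'
      have h2 := keydist a ha a' ha'
      linarith
    obtain ⟨u, hu⟩ := Set.nonempty_iff_ne_empty.mpr hcap
    have hu1 : u = v ∨ u = parent v := by simpa using hu.1
    have hu2 : u = v' ∨ u = parent v' := by simpa using hu.2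
    have hmv := hmono v hv
    have hmv' := hmono v' hv'
    rcases hu1 with h1 | h1 <;> rcases hu2 with h2 | h2
    · -- v = v' : same edge, contradiction
      have hvv : v = v' := h1.symm.trans h2
      rw [← hvv] at hseg'
      exact absurd (seg_unique i0 hmv hseg hseg' h0) hp
    · -- v = parent v'
      have hpv : parent v' = v := h2.symm.trans h1
      rw [hpv] at hseg' hmv'
      have hb1 : a.1 i0 ≤ φ₀ v i0 := (seg_bounds i0 hmv.le hseg).2
      have hb2 : φ₀ v i0 ≤ a'.1 i0 := (seg_bounds i0 hmv'.le hseg').1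
      have e1 : a.1 = φ₀ v := seg_right i0 hmv hseg (by linarith)
      have e2 : a'.1 = φ₀ v := seg_left i0 hmv' hseg' (by linarith)
      exact absurd (e1.trans e2.symm) hp
    · -- parent v = v'
      have hpv : parent v = v' := h1.symm.trans h2
      rw [hpv] at hseg hmv
      have hb1 : a'.1 i0 ≤ φ₀ v' i0 := (seg_bounds i0 hmv'.le hseg').2
      have hb2 : φ₀ v' i0 ≤ a.1 i0 := (seg_bounds i0 hmv.le hseg).1
      have e1 : a.1 = φ₀ v' := seg_left i0 hmv hseg (by linarith)
      have e2 : a'.1 = φ₀ v' := seg_right i0 hmv' hseg' (by linarith)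
      exact absurd (e1.trans e2.symm) hp
    · -- parent v = u = parent v'
      have hpp : parent v = parent v' := h1.symm.trans h2
      refine ⟨?_, hpp⟩
      rintro rfl
      exact hp (seg_unique i0 hmv hseg hseg' h0)
  -- choose an edge for each point of S
  have hsel : ∀ a, a ∈ S → ∃ v : V, v ≠ root ∧ a.1 ∈ segment ℝ (φ₀ (parent v)) (φ₀ v) :=
    fun a ha => ha.1
  haveI : Nonempty V := ⟨root⟩
  choose! f hf1 hf2 using hsel
  obtain ⟨a₀, ha₀⟩ := hSne
  set u : V := parent (f a₀) with hu
  set C : Finset V := Finset.univ.filter (fun w : V => w ≠ root ∧ parent w = u) with hC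
  have himg : ∀ a ∈ S, f a ∈ C := by
    intro a ha
    rw [hC, Finset.mem_filter]
    refine ⟨Finset.mem_univ _, hf1 a ha, ?_⟩
    by_cases hae : a = a₀
    · rw [hae]
    · exact (keypair a ha a₀ ha₀ hae (f a) (f a₀) (hf1 a ha) (hf1 a₀ ha₀)
        (hf2 a ha) (hf2 a₀ ha₀)).2
  have hinj : Set.InjOn f S := by
    intro a ha a' ha' hfe
    by_contra hne
    exact (keypair a ha a' ha' hne (f a) (f a') (hf1 a ha) (hf1 a' ha')
      (hf2 a ha) (hf2 a' ha')).1 hfe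
  calc S.ncard = (f '' S).ncard := (Set.ncard_image_of_injOn hinj).symm
    _ ≤ (↑C : Set V).ncard := by
        apply Set.ncard_le_ncard _ C.finite_toSet
        rintro _ ⟨a, ha, rfl⟩
        exact himg a ha
    _ = C.card := Set.ncard_coe_finset C
    _ ≤ C.card + (if u = root then 0 else 1) := Nat.le_add_right _ _
    _ ≤ _ := by
        have h := Finset.le_sup (f := fun v : V =>
          (Finset.univ.filter (fun w : V => w ≠ root ∧ parent w = v)).card +
            (if v = root then 0 else 1)) (Finset.mem_univ u)
        simpa [hC] using h
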